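/- The map f ↦ MIC*(f), sending a probability density function on [0,1]² (with the L¹ metric) to the population maximal information coefficient of the corresponding random variable, is uniformly continuous. Quantitatively: if ‖f − f'‖₁ ≤ 2δ with δ ≤ 1/4, then |MIC*(f) − MIC*(f')| ≤ 4H_b(2δ) + 7δ. -/

import Mathlib

open MeasureTheory Real Filter Topology
open scoped ENNReal

/-- Discrete mutual information of a joint distribution `μ` on `ℝ × ℝ` discretized by a grid
with row-quantizer `rowf` (on the y-axis, values below `k`) and column-quantizer `colf`
(on the x-axis, values below `l`): `I = H(rows) + H(cols) − H(cells)`. -/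
noncomputable def gridMI (μ : Measure (ℝ × ℝ)) (k l : ℕ) (rowf colf : ℝ → ℕ) : ℝ :=
    (∑ i ∈ Finset.range k, Real.negMulLog ((μ {z | rowf z.2 = i}).toReal))
  + (∑ j ∈ Finset.range l, Real.negMulLog ((μ {z | colf z.1 = j}).toReal))
  - ∑ i ∈ Finset.range k, ∑ j ∈ Finset.range l,
      Real.negMulLog ((μ {z | rowf z.2 = i ∧ colf z.1 = j}).toReal)

/-- A partition of the line into at most `k` intervals, encoded as a monotone cell-index map. -/
def IsIntervalPart (k : ℕ) (p : ℝ → ℕ) : Prop := Monotone p ∧ ∀ t, p t < k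

/-- A finite measurable partition of the line into at most `k` cells. -/
def IsMeasPart (k : ℕ) (p : ℝ → ℕ) : Prop := Measurable p ∧ ∀ t, p t < k

/-- `I*((X,Y),k,ℓ)`: the supremum of discrete mutual information over all `k`-row-by-`ℓ`-column
grids applied to the joint distribution `μ`. -/
noncomputable def IStar (μ : Measure (ℝ × ℝ)) (k l : ℕ) : ℝ :=
  ⨆ g : {g : (ℝ → ℕ) × (ℝ → ℕ) // IsIntervalPart k g.1 ∧ IsIntervalPart l g.2},
    gridMI μ k l g.1.1 g.1.2

/-- The `(k,ℓ)` entry of the population characteristic matrix. -/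
noncomputable def charMatrix (μ : Measure (ℝ × ℝ)) (k l : ℕ) : ℝ :=
  IStar μ k l / Real.log (min k l)

/-- The population maximal information coefficient `MIC*`. -/
noncomputable def MICStar (μ : Measure (ℝ × ℝ)) : ℝ :=
  ⨆ (k : {n : ℕ // 1 < n}) (l : {n : ℕ // 1 < n}), charMatrix μ k l

/-- `I(X, Y|_P)`: mutual information between `X` and the discretization of `Y` by the
partition `rowf` (into at most `k` cells), defined as the supremum of discrete mutual
informations over all finite measurable quantizations of `X`. -/
noncomputable def mixedMI_Y (μ : Measure (ℝ × ℝ)) (k : ℕ) (rowf : ℝ → ℕ) : ℝ :=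
  ⨆ c : {c : ℕ × (ℝ → ℕ) // IsMeasPart c.1 c.2}, gridMI μ k c.1.1 rowf c.1.2

/-- `I(X|_P, Y)`: mutual information between the discretization of `X` by the partition
`colf` (into at most `ℓ` cells) and `Y`. -/
noncomputable def mixedMI_X (μ : Measure (ℝ × ℝ)) (l : ℕ) (colf : ℝ → ℕ) : ℝ :=
  ⨆ r : {r : ℕ × (ℝ → ℕ) // IsMeasPart r.1 r.2}, gridMI μ r.1.1 l r.1.2 colf

/-- The mutual information of a joint distribution on `ℝ × ℝ` (possibly infinite), defined as
the supremum over all finite measurable quantizations of both coordinates of the discrete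
mutual information. -/
noncomputable def mutualInfo (μ : Measure (ℝ × ℝ)) : ℝ≥0∞ :=
  ⨆ g : {g : (ℕ × (ℝ → ℕ)) × (ℕ × (ℝ → ℕ)) //
      IsMeasPart g.1.1 g.1.2 ∧ IsMeasPart g.2.1 g.2.2},
    ENNReal.ofReal (gridMI μ g.1.1.1 g.1.2.1 g.1.1.2 g.1.2.2)

namespace MICAux
local notation "η" => Real.negMulLog

/-- Two-point subadditivity of `negMulLog` on nonnegatives. -/
lemma eta_add_le {x y : ℝ} (hx : 0 ≤ x) (hy : 0 ≤ y) : η (x + y) ≤ η x + η y := by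
  rcases eq_or_lt_of_le hx with h | hx'
  · simp [← h]
  rcases eq_or_lt_of_le hy with h | hy'
  · simp [← h]
  have h1 : -(x * Real.log (x + y)) ≤ -(x * Real.log x) := by
    have := Real.log_le_log (by positivity) (by linarith : x ≤ x + y)
    nlinarith
  have h2 : -(y * Real.log (x + y)) ≤ -(y * Real.log y) := by
    have := Real.log_le_log (by positivity) (by linarith : y ≤ x + y)
    nlinarith
  simp only [Real.negMulLog, neg_mul]
  nlinarith

/-- Subadditivity over a finite sum. -/
lemma eta_sum_le (A : Finset ℕ) (v : ℕ → ℝ) (h0 : ∀ a ∈ A, 0 ≤ v a) :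
    η (∑ a ∈ A, v a) ≤ ∑ a ∈ A, η (v a) := by
  induction A using Finset.cons_induction with
  | empty => simp
  | cons a s ha ih =>
    rw [Finset.sum_cons, Finset.sum_cons]
    calc η (v a + ∑ x ∈ s, v x) ≤ η (v a) + η (∑ x ∈ s, v x) :=
          eta_add_le (h0 a (Finset.mem_cons_self a s))
            (Finset.sum_nonneg fun x hx => h0 x (Finset.mem_cons_of_mem hx))
      _ ≤ η (v a) + ∑ x ∈ s, η (v x) := by
          have := ih fun x hx => h0 x (Finset.mem_cons_of_mem hx)
          linarith

/-- Max-entropy bound: `∑ η(v a) ≤ η(S) + S log |A|`. -/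
lemma sum_eta_le (A : Finset ℕ) (v : ℕ → ℝ) (h0 : ∀ a ∈ A, 0 ≤ v a) :
    ∑ a ∈ A, η (v a) ≤ η (∑ a ∈ A, v a) + (∑ a ∈ A, v a) * Real.log A.card := by
  rcases A.eq_empty_or_nonempty with rfl | hA
  · simp
  set S := ∑ a ∈ A, v a with hS
  have hS0 : 0 ≤ S := Finset.sum_nonneg h0
  have hcard : (0:ℝ) < A.card := by exact_mod_cast hA.card_pos
  have key : ∀ a ∈ A, η (v a) ≤ -(v a * Real.log S) + v a * Real.log A.card
      + (S / A.card - v a) := by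
    intro a ha
    rcases eq_or_lt_of_le (h0 a ha) with h | hv
    · simp only [← h, Real.negMulLog_zero, mul_zero, zero_mul, neg_zero, sub_zero, zero_add,
        add_zero]
      positivity
    · have hSpos : 0 < S := lt_of_lt_of_le hv (Finset.single_le_sum h0 ha)
      have harg : 0 < S / (v a * A.card) := by positivity
      have hlog := Real.log_le_sub_one_of_pos harg
      have hexp : Real.log (S / (v a * A.card)) =
          Real.log S - Real.log (v a) - Real.log A.card := by
        rw [Real.log_div (ne_of_gt hSpos) (by positivity), Real.log_mul (ne_of_gt hv)
          (ne_of_gt hcard)]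
        ring
      have := mul_le_mul_of_nonneg_left hlog (le_of_lt hv)
      rw [hexp] at this
      have hdiv : v a * (S / (v a * A.card) - 1) = S / A.card - v a := by
        field_simp
      rw [hdiv] at this
      simp only [Real.negMulLog, neg_mul]
      nlinarith
  calc ∑ a ∈ A, η (v a)
      ≤ ∑ a ∈ A, (-(v a * Real.log S) + v a * Real.log A.card + (S / A.card - v a)) :=
        Finset.sum_le_sum key
    _ = η S + S * Real.log A.card := by
        have h1 : ∑ a ∈ A, -(v a * Real.log S) = -(S * Real.log S) := by
          rw [Finset.sum_neg_distrib, ← Finset.sum_mul, ← hS]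
        have h2 : ∑ a ∈ A, v a * Real.log A.card = S * Real.log A.card := by
          rw [← Finset.sum_mul]
        have h3 : ∑ a ∈ A, (S / A.card - v a) = 0 := by
          rw [Finset.sum_sub_distrib, Finset.sum_const, nsmul_eq_mul, ← hS]
          field_simp
          ring
        rw [Finset.sum_add_distrib, Finset.sum_add_distrib, h1, h2, h3]
        simp [Real.negMulLog]


/-- per-cell function `g x s = x (log s − log x)` for conditional entropy. -/
noncomputable def g (x s : ℝ) : ℝ := x * (Real.log s - Real.log x)

/-- Log-sum inequality / superadditivity of `g`. -/
lemma g_superadd {u v u' v' : ℝ} (hu : 0 ≤ u) (huv : u ≤ v) (hu' : 0 ≤ u') (huv' : u' ≤ v') :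
    g u v + g u' v' ≤ g (u + u') (v + v') := by
  have hv : 0 ≤ v := le_trans hu huv
  have hv' : 0 ≤ v' := le_trans hu' huv'
  rcases eq_or_lt_of_le hv with h | hvpos
  · have : u = 0 := le_antisymm (h ▸ huv) hu
    simp [g, ← h, this]
  rcases eq_or_lt_of_le hv' with h | hv'pos
  · have : u' = 0 := le_antisymm (h ▸ huv') hu'
    simp [g, ← h, this]
  rcases eq_or_lt_of_le hu with h | hupos
  · simp only [g, ← h, zero_mul, zero_add, add_zero]
    have h1 : Real.log v' ≤ Real.log (v + v') := Real.log_le_log hv'pos (by linarith)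
    nlinarith
  rcases eq_or_lt_of_le hu' with h | hu'pos
  · simp only [g, ← h, zero_mul, add_zero]
    have h1 : Real.log v ≤ Real.log (v + v') := Real.log_le_log hvpos (by linarith)
    nlinarith
  -- main case via convexity of x log x
  have hW : (0:ℝ) < v + v' := by linarith
  have hcvx := Real.convexOn_mul_log.2 (Set.mem_Ici.mpr (by positivity : (0:ℝ) ≤ u / v))
    (Set.mem_Ici.mpr (by positivity : (0:ℝ) ≤ u' / v'))
    (by positivity : (0:ℝ) ≤ v / (v + v')) (by positivity : (0:ℝ) ≤ v' / (v + v'))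
    (by field_simp)
  simp only [smul_eq_mul] at hcvx
  have harg : v / (v + v') * (u / v) + v' / (v + v') * (u' / v') = (u + u') / (v + v') := by
    field_simp
  rw [harg] at hcvx
  have hmul := mul_le_mul_of_nonneg_left hcvx (le_of_lt hW)
  have lhs : (v + v') * ((u + u') / (v + v') * Real.log ((u + u') / (v + v')))
      = (u + u') * (Real.log (u + u') - Real.log (v + v')) := by
    rw [Real.log_div (by positivity) (ne_of_gt hW)]
    field_simp
  have rhs : (v + v') * (v / (v + v') * (u / v * Real.log (u / v))
        + v' / (v + v') * (u' / v' * Real.log (u' / v')))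
      = u * (Real.log u - Real.log v) + u' * (Real.log u' - Real.log v') := by
    rw [Real.log_div (ne_of_gt hupos) (ne_of_gt hvpos),
      Real.log_div (ne_of_gt hu'pos) (ne_of_gt hv'pos)]
    field_simp
  rw [lhs, rhs] at hmul
  simp only [g]
  nlinarith


/-- Conditional entropy `H(A|B)` of a grid distribution. -/
noncomputable def condH (A B : Finset ℕ) (p : ℕ → ℕ → ℝ) : ℝ :=
  ∑ b ∈ B, ((∑ a ∈ A, η (p a b)) - η (∑ a ∈ A, p a b))

lemma condH_eq (A B : Finset ℕ) (p : ℕ → ℕ → ℝ) :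
    condH A B p = ∑ b ∈ B, ∑ a ∈ A, g (p a b) (∑ a' ∈ A, p a' b) := by
  unfold condH
  refine Finset.sum_congr rfl fun b _ => ?_
  set s := ∑ a' ∈ A, p a' b with hs
  have : ∑ a ∈ A, g (p a b) s = (∑ a ∈ A, p a b) * Real.log s + ∑ a ∈ A, η (p a b) := by
    unfold g
    rw [Finset.sum_mul]
    rw [← Finset.sum_add_distrib]
    refine Finset.sum_congr rfl fun a _ => ?_
    simp [Real.negMulLog]
    ring
  rw [this, ← hs]
  simp [Real.negMulLog]
  ring

lemma g_smul {l x s : ℝ} (hl : 0 ≤ l) (hx : 0 ≤ x) (hxs : x ≤ s) :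
    g (l * x) (l * s) = l * g x s := by
  rcases eq_or_lt_of_le hl with h | hl'
  · simp [g, ← h]
  rcases eq_or_lt_of_le hx with h | hx'
  · simp [g, ← h]
  have hs : 0 < s := lt_of_lt_of_le hx' hxs
  unfold g
  rw [Real.log_mul (ne_of_gt hl') (ne_of_gt hs), Real.log_mul (ne_of_gt hl') (ne_of_gt hx')]
  ring

/-- Concavity of conditional entropy (two-point). -/
lemma condH_concave (A B : Finset ℕ) (p q : ℕ → ℕ → ℝ)
    (hp0 : ∀ a ∈ A, ∀ b ∈ B, 0 ≤ p a b) (hq0 : ∀ a ∈ A, ∀ b ∈ B, 0 ≤ q a b)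
    {l l' : ℝ} (hl : 0 ≤ l) (hl' : 0 ≤ l') :
    l * condH A B p + l' * condH A B q
      ≤ condH A B (fun a b => l * p a b + l' * q a b) := by
  rw [condH_eq, condH_eq, condH_eq, Finset.mul_sum, Finset.mul_sum, ← Finset.sum_add_distrib]
  refine Finset.sum_le_sum fun b hb => ?_
  rw [Finset.mul_sum, Finset.mul_sum, ← Finset.sum_add_distrib]
  refine Finset.sum_le_sum fun a ha => ?_
  have hsum : ∑ a' ∈ A, (l * p a' b + l' * q a' b)
      = l * ∑ a' ∈ A, p a' b + l' * ∑ a' ∈ A, q a' b := by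
    rw [Finset.sum_add_distrib, Finset.mul_sum, Finset.mul_sum]
  rw [hsum]
  have hps : p a b ≤ ∑ a' ∈ A, p a' b :=
    Finset.single_le_sum (fun a' ha' => hp0 a' ha' b hb) ha
  have hqs : q a b ≤ ∑ a' ∈ A, q a' b :=
    Finset.single_le_sum (fun a' ha' => hq0 a' ha' b hb) ha
  calc l * g (p a b) (∑ a' ∈ A, p a' b) + l' * g (q a b) (∑ a' ∈ A, q a' b)
      = g (l * p a b) (l * ∑ a' ∈ A, p a' b) + g (l' * q a b) (l' * ∑ a' ∈ A, q a' b) := by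
        rw [g_smul hl (hp0 a ha b hb) hps, g_smul hl' (hq0 a ha b hb) hqs]
    _ ≤ g (l * p a b + l' * q a b) (l * ∑ a' ∈ A, p a' b + l' * ∑ a' ∈ A, q a' b) :=
        g_superadd (mul_nonneg hl (hp0 a ha b hb)) (mul_le_mul_of_nonneg_left hps hl)
          (mul_nonneg hl' (hq0 a ha b hb)) (mul_le_mul_of_nonneg_left hqs hl')


lemma condH_nonneg (A B : Finset ℕ) (p : ℕ → ℕ → ℝ)
    (hp0 : ∀ a ∈ A, ∀ b ∈ B, 0 ≤ p a b) : 0 ≤ condH A B p := by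
  unfold condH
  refine Finset.sum_nonneg fun b hb => ?_
  have := eta_sum_le A (fun a => p a b) (fun a ha => hp0 a ha b hb)
  linarith

lemma condH_le (A B : Finset ℕ) (p : ℕ → ℕ → ℝ)
    (hp0 : ∀ a ∈ A, ∀ b ∈ B, 0 ≤ p a b) :
    condH A B p ≤ (∑ b ∈ B, ∑ a ∈ A, p a b) * Real.log A.card := by
  unfold condH
  rw [Finset.sum_mul]
  refine Finset.sum_le_sum fun b hb => ?_
  have := sum_eta_le A (fun a => p a b) (fun a ha => hp0 a ha b hb)
  linarith

lemma eta_convex_combo {l l' x y : ℝ} (hl : 0 ≤ l) (hl' : 0 ≤ l')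
    (hx : 0 ≤ x) (hy : 0 ≤ y) :
    η (l * x + l' * y) ≤ l * η x + l' * η y + x * η l + y * η l' := by
  have h1 : η (l * x + l' * y) ≤ η (l * x) + η (l' * y) :=
    eta_add_le (mul_nonneg hl hx) (mul_nonneg hl' hy)
  have h2 : η (l * x) = x * η l + l * η x := Real.negMulLog_mul l x
  have h3 : η (l' * y) = y * η l' + l' * η y := Real.negMulLog_mul l' y
  linarith

/-- Almost convexity of conditional entropy. -/
lemma condH_almost_convex (A B : Finset ℕ) (p q : ℕ → ℕ → ℝ)
    (hp0 : ∀ a ∈ A, ∀ b ∈ B, 0 ≤ p a b) (hq0 : ∀ a ∈ A, ∀ b ∈ B, 0 ≤ q a b)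
    (hp1 : ∑ b ∈ B, ∑ a ∈ A, p a b = 1) (hq1 : ∑ b ∈ B, ∑ a ∈ A, q a b = 1)
    {l l' : ℝ} (hl : 0 ≤ l) (hl' : 0 ≤ l') (hll' : l + l' = 1) :
    condH A B (fun a b => l * p a b + l' * q a b)
      ≤ l * condH A B p + l' * condH A B q + η l + η l' := by
  have hJ : ∀ b ∈ B, ∑ a ∈ A, η (l * p a b + l' * q a b)
      ≤ ∑ a ∈ A, (l * η (p a b) + l' * η (q a b) + p a b * η l + q a b * η l') :=
    fun b hb => Finset.sum_le_sum fun a ha =>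
      eta_convex_combo hl hl' (hp0 a ha b hb) (hq0 a ha b hb)
  have hHB : ∀ b ∈ B, l * η (∑ a ∈ A, p a b) + l' * η (∑ a ∈ A, q a b)
      ≤ η (∑ a ∈ A, (l * p a b + l' * q a b)) := by
    intro b hb
    have hsum : ∑ a ∈ A, (l * p a b + l' * q a b)
        = l * ∑ a ∈ A, p a b + l' * ∑ a ∈ A, q a b := by
      rw [Finset.sum_add_distrib, Finset.mul_sum, Finset.mul_sum]
    rw [hsum]
    have := Real.concaveOn_negMulLog.2
      (Set.mem_Ici.mpr (Finset.sum_nonneg fun a ha => hp0 a ha b hb))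
      (Set.mem_Ici.mpr (Finset.sum_nonneg fun a ha => hq0 a ha b hb)) hl hl' hll'
    simpa using this
  unfold condH
  have step : ∀ b ∈ B, (∑ a ∈ A, η (l * p a b + l' * q a b))
        - η (∑ a ∈ A, (l * p a b + l' * q a b))
      ≤ l * ((∑ a ∈ A, η (p a b)) - η (∑ a ∈ A, p a b))
        + l' * ((∑ a ∈ A, η (q a b)) - η (∑ a ∈ A, q a b))
        + ((∑ a ∈ A, p a b) * η l + (∑ a ∈ A, q a b) * η l') := by
    intro b hb
    have h1 := hJ b hb
    have h2 := hHB b hb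
    have h3 : ∑ a ∈ A, (l * η (p a b) + l' * η (q a b) + p a b * η l + q a b * η l')
        = l * ∑ a ∈ A, η (p a b) + l' * ∑ a ∈ A, η (q a b)
          + (∑ a ∈ A, p a b) * η l + (∑ a ∈ A, q a b) * η l' := by
      simp only [Finset.sum_add_distrib, Finset.mul_sum, Finset.sum_mul]
    rw [h3] at h1
    linarith
  calc ∑ b ∈ B, ((∑ a ∈ A, η (l * p a b + l' * q a b))
        - η (∑ a ∈ A, (l * p a b + l' * q a b)))
      ≤ ∑ b ∈ B, (l * ((∑ a ∈ A, η (p a b)) - η (∑ a ∈ A, p a b))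
        + l' * ((∑ a ∈ A, η (q a b)) - η (∑ a ∈ A, q a b))
        + ((∑ a ∈ A, p a b) * η l + (∑ a ∈ A, q a b) * η l')) := Finset.sum_le_sum step
    _ = l * condH A B p + l' * condH A B q + η l + η l' := by
        unfold condH
        simp only [Finset.sum_add_distrib]
        rw [← Finset.mul_sum, ← Finset.mul_sum, ← Finset.sum_mul, ← Finset.sum_mul,
          hp1, hq1]
        ring

lemma max_sub_identity (x y : ℝ) : x + max (y - x) 0 = y + max (x - y) 0 := by
  rcases le_total x y with h | h
  · rw [max_eq_left (by linarith), max_eq_right (by linarith)]; linarith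
  · rw [max_eq_right (by linarith), max_eq_left (by linarith)]; linarith

lemma two_max_eq (x y : ℝ) : 2 * max (y - x) 0 = |x - y| + (y - x) := by
  rcases le_total x y with h | h
  · rw [max_eq_left (by linarith), abs_of_nonpos (by linarith)]; ring
  · rw [max_eq_right (by linarith), abs_of_nonneg (by linarith)]; ring

/-- Alicki–Fannes-type continuity of conditional entropy. -/
lemma condH_sub_le (A B : Finset ℕ) (hA : A.Nonempty) (hB : B.Nonempty)
    (p q : ℕ → ℕ → ℝ)
    (hp0 : ∀ a b, 0 ≤ p a b) (hq0 : ∀ a b, 0 ≤ q a b)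
    (hp1 : ∑ b ∈ B, ∑ a ∈ A, p a b = 1) (hq1 : ∑ b ∈ B, ∑ a ∈ A, q a b = 1)
    {δ : ℝ} (hδ0 : 0 < δ)
    (hTV : ∑ b ∈ B, ∑ a ∈ A, |p a b - q a b| ≤ 2 * δ) :
    condH A B p - condH A B q
      ≤ δ * Real.log A.card + (η δ + (1 + δ) * Real.log (1 + δ)) := by
  obtain ⟨a₀, ha₀⟩ := hA
  obtain ⟨b₀, hb₀⟩ := hB
  set s := ∑ b ∈ B, ∑ a ∈ A, max (q a b - p a b) 0 with hs_def
  have hs0 : 0 ≤ s := Finset.sum_nonneg fun b _ => Finset.sum_nonneg fun a _ => by positivity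
  have h2s : 2 * s = (∑ b ∈ B, ∑ a ∈ A, |p a b - q a b|)
      + ((∑ b ∈ B, ∑ a ∈ A, q a b) - (∑ b ∈ B, ∑ a ∈ A, p a b)) := by
    rw [hs_def, Finset.mul_sum]
    simp only [Finset.mul_sum, two_max_eq]
    rw [← Finset.sum_sub_distrib, ← Finset.sum_add_distrib]
    refine Finset.sum_congr rfl fun b _ => ?_
    rw [← Finset.sum_sub_distrib, ← Finset.sum_add_distrib]
  have hsδ : s ≤ δ := by rw [hp1, hq1] at h2s; linarith
  have hs'eq : ∑ b ∈ B, ∑ a ∈ A, max (p a b - q a b) 0 = s := by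
    have : ∀ b ∈ B, ∀ a ∈ A, max (p a b - q a b) 0
        = max (q a b - p a b) 0 + (p a b - q a b) := by
      intro b _ a _
      have := max_sub_identity (q a b) (p a b); linarith
    calc ∑ b ∈ B, ∑ a ∈ A, max (p a b - q a b) 0
        = ∑ b ∈ B, ∑ a ∈ A, (max (q a b - p a b) 0 + (p a b - q a b)) := by
          refine Finset.sum_congr rfl fun b hb => Finset.sum_congr rfl fun a ha => this b hb a ha
      _ = s := by
          simp only [Finset.sum_add_distrib, Finset.sum_sub_distrib]
          rw [hp1, hq1, ← hs_def]; ring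
  set u : ℕ → ℕ → ℝ := fun a b => (if a = a₀ then (1:ℝ) else 0) * (if b = b₀ then (1:ℝ) else 0)
    with hu_def
  have hu0 : ∀ a b, 0 ≤ u a b := by
    intro a b; rw [hu_def]; dsimp only; split <;> split <;> norm_num
  have hu1 : ∑ b ∈ B, ∑ a ∈ A, u a b = 1 := by
    rw [hu_def]
    simp only [← Finset.sum_mul, Finset.sum_ite_eq' A a₀ (fun _ => (1:ℝ)), if_pos ha₀]
    simp [Finset.sum_ite_eq' B b₀ (fun _ => (1:ℝ)), if_pos hb₀]
  set σ : ℕ → ℕ → ℝ := fun a b => (max (q a b - p a b) 0 + (δ - s) * u a b) / δ with hσ_def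
  set σ' : ℕ → ℕ → ℝ := fun a b => (max (p a b - q a b) 0 + (δ - s) * u a b) / δ with hσ'_def
  have hσ0 : ∀ a b, 0 ≤ σ a b := by
    intro a b
    have := hu0 a b
    have h1 : (0:ℝ) ≤ max (q a b - p a b) 0 := le_max_right _ _
    have h2 : 0 ≤ δ - s := by linarith
    rw [hσ_def]; positivity
  have hσ'0 : ∀ a b, 0 ≤ σ' a b := by
    intro a b
    have := hu0 a b
    have h1 : (0:ℝ) ≤ max (p a b - q a b) 0 := le_max_right _ _
    have h2 : 0 ≤ δ - s := by linarith
    rw [hσ'_def]; positivity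
  have expand : ∀ (v : ℕ → ℕ → ℝ),
      ∑ b ∈ B, ∑ a ∈ A, (v a b + (δ - s) * u a b) / δ
        = ((∑ b ∈ B, ∑ a ∈ A, v a b) + (δ - s)) / δ := by
    intro v
    have hterm : ∀ a b, (v a b + (δ - s) * u a b) / δ
        = v a b / δ + ((δ - s) / δ) * u a b := by
      intro a b; rw [add_div]; ring
    simp only [hterm, Finset.sum_add_distrib]
    have h1 : ∑ b ∈ B, ∑ a ∈ A, v a b / δ = (∑ b ∈ B, ∑ a ∈ A, v a b) / δ := by
      rw [Finset.sum_div]; exact Finset.sum_congr rfl fun b _ => by rw [Finset.sum_div]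
    have h2 : ∑ b ∈ B, ∑ a ∈ A, ((δ - s) / δ) * u a b = (δ - s) / δ := by
      simp only [← Finset.mul_sum]
      rw [hu1, mul_one]
    rw [h1, h2, ← add_div]
  have hσ1 : ∑ b ∈ B, ∑ a ∈ A, σ a b = 1 := by
    rw [hσ_def]
    have := expand (fun a b => max (q a b - p a b) 0)
    rw [this, ← hs_def]
    field_simp
    ring
  have hσ'1 : ∑ b ∈ B, ∑ a ∈ A, σ' a b = 1 := by
    rw [hσ'_def]
    have := expand (fun a b => max (p a b - q a b) 0)
    rw [this, hs'eq]
    field_simp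
    ring
  have h1δ : (0:ℝ) < 1 + δ := by linarith
  set l : ℝ := 1 / (1 + δ) with hl_def
  set l' : ℝ := δ / (1 + δ) with hl'_def
  have hl : 0 ≤ l := by positivity
  have hl' : 0 ≤ l' := by positivity
  have hll' : l + l' = 1 := by rw [hl_def, hl'_def]; field_simp
  have hδne : δ ≠ 0 := ne_of_gt hδ0
  have h1δne : (1 + δ) ≠ 0 := ne_of_gt h1δ
  have hωeq : (fun a b => l * p a b + l' * σ a b) = (fun a b => l * q a b + l' * σ' a b) := by
    funext a b
    have hkey := max_sub_identity (p a b) (q a b)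
    have e1 : l * p a b + l' * σ a b
        = (p a b + (max (q a b - p a b) 0 + (δ - s) * u a b)) / (1 + δ) := by
      rw [hl_def, hl'_def, hσ_def]; dsimp only; field_simp
    have e2 : l * q a b + l' * σ' a b
        = (q a b + (max (p a b - q a b) 0 + (δ - s) * u a b)) / (1 + δ) := by
      rw [hl_def, hl'_def, hσ'_def]; dsimp only; field_simp
    rw [e1, e2]
    congr 1
    linarith [hkey]
  have hconc := condH_concave A B p σ (fun a ha b hb => hp0 a b) (fun a ha b hb => hσ0 a b)
    hl hl'
  have halm := condH_almost_convex A B q σ' (fun a ha b hb => hq0 a b)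
    (fun a ha b hb => hσ'0 a b) hq1 hσ'1 hl hl' hll'
  rw [hωeq] at hconc
  have hσnn := condH_nonneg A B σ (fun a ha b hb => hσ0 a b)
  have hσ'le : condH A B σ' ≤ Real.log A.card := by
    have := condH_le A B σ' (fun a ha b hb => hσ'0 a b)
    rw [hσ'1, one_mul] at this
    exact this
  -- combine: l * (condH p - condH q) ≤ l' * log|A| + η l + η l'
  have hmain : l * (condH A B p - condH A B q) ≤ l' * Real.log A.card + η l + η l' := by
    nlinarith [hconc, halm, hσnn, hσ'le, hl']
  -- multiply through by (1+δ)
  have hηl : η l = l * Real.log (1 + δ) := by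
    rw [hl_def]
    simp [Real.negMulLog, Real.log_div one_ne_zero (ne_of_gt h1δ)]
  have hηl' : η l' = -(l' * (Real.log δ - Real.log (1 + δ))) := by
    rw [hl'_def]
    simp [Real.negMulLog, Real.log_div (ne_of_gt hδ0) (ne_of_gt h1δ)]
  have hexp : (1 + δ) * (l' * Real.log A.card + η l + η l')
      = δ * Real.log A.card + (η δ + (1 + δ) * Real.log (1 + δ)) := by
    rw [hηl, hηl', hl_def, hl'_def]
    simp only [Real.negMulLog]
    field_simp
    ring
  have hfin := mul_le_mul_of_nonneg_left hmain (le_of_lt h1δ)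
  have hlcancel : (1 + δ) * (l * (condH A B p - condH A B q))
      = condH A B p - condH A B q := by
    rw [hl_def]; field_simp
  rw [hlcancel, hexp] at hfin
  exact hfin

/-- Discrete mutual information of a grid distribution. -/
noncomputable def dI (A B : Finset ℕ) (p : ℕ → ℕ → ℝ) : ℝ :=
  (∑ a ∈ A, η (∑ b ∈ B, p a b)) + (∑ b ∈ B, η (∑ a ∈ A, p a b))
    - ∑ a ∈ A, ∑ b ∈ B, η (p a b)

lemma dI_eq (A B : Finset ℕ) (p : ℕ → ℕ → ℝ) :
    dI A B p = (∑ a ∈ A, η (∑ b ∈ B, p a b)) - condH A B p := by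
  unfold dI condH
  rw [Finset.sum_sub_distrib, Finset.sum_comm (s := A)]
  ring

lemma dI_swap (A B : Finset ℕ) (p : ℕ → ℕ → ℝ) :
    dI A B p = dI B A (fun b a => p a b) := by
  unfold dI
  rw [Finset.sum_comm (s := A)]
  ring

/-- Continuity of the marginal entropy term, via `condH` with a trivial conditioning. -/
lemma vH_sub_le (A : Finset ℕ) (hA : A.Nonempty) (v w : ℕ → ℝ)
    (hv0 : ∀ a, 0 ≤ v a) (hw0 : ∀ a, 0 ≤ w a)
    (hv1 : ∑ a ∈ A, v a = 1) (hw1 : ∑ a ∈ A, w a = 1)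
    {δ : ℝ} (hδ0 : 0 < δ) (hTV : ∑ a ∈ A, |v a - w a| ≤ 2 * δ) :
    (∑ a ∈ A, η (v a)) - (∑ a ∈ A, η (w a))
      ≤ δ * Real.log A.card + (η δ + (1 + δ) * Real.log (1 + δ)) := by
  have h := condH_sub_le A {0} hA ⟨0, Finset.mem_singleton_self 0⟩
    (fun a _ => v a) (fun a _ => w a) (fun a _ => hv0 a) (fun a _ => hw0 a)
    (by simpa using hv1) (by simpa using hw1) hδ0 (by simpa using hTV)
  unfold condH at h
  simpa [hv1, hw1] using h

/-- Two-sided continuity of mutual information in terms of `log |A|`. -/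
lemma dI_cont (A B : Finset ℕ) (hA : A.Nonempty) (hB : B.Nonempty)
    (p q : ℕ → ℕ → ℝ) (hp0 : ∀ a b, 0 ≤ p a b) (hq0 : ∀ a b, 0 ≤ q a b)
    (hp1 : ∑ b ∈ B, ∑ a ∈ A, p a b = 1) (hq1 : ∑ b ∈ B, ∑ a ∈ A, q a b = 1)
    {δ : ℝ} (hδ0 : 0 < δ)
    (hTV : ∑ b ∈ B, ∑ a ∈ A, |p a b - q a b| ≤ 2 * δ) :
    |dI A B p - dI A B q|
      ≤ 2 * (δ * Real.log A.card + (η δ + (1 + δ) * Real.log (1 + δ))) := by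
  have hTV' : ∑ b ∈ B, ∑ a ∈ A, |q a b - p a b| ≤ 2 * δ := by
    simpa [abs_sub_comm] using hTV
  have hc1 := condH_sub_le A B hA hB p q hp0 hq0 hp1 hq1 hδ0 hTV
  have hc2 := condH_sub_le A B hA hB q p hq0 hp0 hq1 hp1 hδ0 hTV'
  -- marginal rows
  have hrow1 : ∑ a ∈ A, ∑ b ∈ B, p a b = 1 := by rw [Finset.sum_comm]; exact hp1
  have hrow2 : ∑ a ∈ A, ∑ b ∈ B, q a b = 1 := by rw [Finset.sum_comm]; exact hq1
  have hTVrow : ∑ a ∈ A, |(∑ b ∈ B, p a b) - ∑ b ∈ B, q a b| ≤ 2 * δ := by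
    calc ∑ a ∈ A, |(∑ b ∈ B, p a b) - ∑ b ∈ B, q a b|
        = ∑ a ∈ A, |∑ b ∈ B, (p a b - q a b)| := by
          refine Finset.sum_congr rfl fun a _ => ?_
          rw [Finset.sum_sub_distrib]
      _ ≤ ∑ a ∈ A, ∑ b ∈ B, |p a b - q a b| :=
          Finset.sum_le_sum fun a _ => Finset.abs_sum_le_sum_abs _ _
      _ = ∑ b ∈ B, ∑ a ∈ A, |p a b - q a b| := Finset.sum_comm
      _ ≤ 2 * δ := hTV
  have hTVrow' : ∑ a ∈ A, |(∑ b ∈ B, q a b) - ∑ b ∈ B, p a b| ≤ 2 * δ := by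
    simpa [abs_sub_comm] using hTVrow
  have hm1 := vH_sub_le A hA (fun a => ∑ b ∈ B, p a b) (fun a => ∑ b ∈ B, q a b)
    (fun a => Finset.sum_nonneg fun b _ => hp0 a b)
    (fun a => Finset.sum_nonneg fun b _ => hq0 a b) hrow1 hrow2 hδ0 hTVrow
  have hm2 := vH_sub_le A hA (fun a => ∑ b ∈ B, q a b) (fun a => ∑ b ∈ B, p a b)
    (fun a => Finset.sum_nonneg fun b _ => hq0 a b)
    (fun a => Finset.sum_nonneg fun b _ => hp0 a b) hrow2 hrow1 hδ0 hTVrow'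
  rw [dI_eq, dI_eq]
  rw [abs_le]
  constructor <;> [linarith; linarith]

/-- Continuity of mutual information in terms of `log min(|A|,|B|)`. -/
lemma dI_cont_min (A B : Finset ℕ) (hA : A.Nonempty) (hB : B.Nonempty)
    (p q : ℕ → ℕ → ℝ) (hp0 : ∀ a b, 0 ≤ p a b) (hq0 : ∀ a b, 0 ≤ q a b)
    (hp1 : ∑ b ∈ B, ∑ a ∈ A, p a b = 1) (hq1 : ∑ b ∈ B, ∑ a ∈ A, q a b = 1)
    {δ : ℝ} (hδ0 : 0 < δ)
    (hTV : ∑ b ∈ B, ∑ a ∈ A, |p a b - q a b| ≤ 2 * δ) :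
    |dI A B p - dI A B q|
      ≤ 2 * (δ * Real.log (min A.card B.card : ℕ)
        + (η δ + (1 + δ) * Real.log (1 + δ))) := by
  rcases le_total A.card B.card with h | h
  · rw [min_eq_left h]
    exact dI_cont A B hA hB p q hp0 hq0 hp1 hq1 hδ0 hTV
  · rw [min_eq_right h]
    rw [dI_swap A B p, dI_swap A B q]
    exact dI_cont B A hB hA (fun b a => p a b) (fun b a => q a b)
      (fun b a => hp0 a b) (fun b a => hq0 a b)
      (by rw [Finset.sum_comm]; exact hp1) (by rw [Finset.sum_comm]; exact hq1) hδ0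
      (by rw [Finset.sum_comm]; exact hTV)

lemma dI_le_logA (A B : Finset ℕ) (p : ℕ → ℕ → ℝ) (hp0 : ∀ a b, 0 ≤ p a b)
    (hp1 : ∑ b ∈ B, ∑ a ∈ A, p a b = 1) : dI A B p ≤ Real.log A.card := by
  rw [dI_eq]
  have h1 := condH_nonneg A B p (fun a _ b _ => hp0 a b)
  have h2 := sum_eta_le A (fun a => ∑ b ∈ B, p a b)
    (fun a _ => Finset.sum_nonneg fun b _ => hp0 a b)
  have hrow : ∑ a ∈ A, ∑ b ∈ B, p a b = 1 := by rw [Finset.sum_comm]; exact hp1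
  rw [hrow] at h2
  simp only [Real.negMulLog_one, one_mul, zero_add] at h2
  linarith

lemma dI_le_min (A B : Finset ℕ) (p : ℕ → ℕ → ℝ) (hp0 : ∀ a b, 0 ≤ p a b)
    (hp1 : ∑ b ∈ B, ∑ a ∈ A, p a b = 1) :
    dI A B p ≤ Real.log (min A.card B.card : ℕ) := by
  rcases le_total A.card B.card with h | h
  · rw [min_eq_left h]; exact dI_le_logA A B p hp0 hp1
  · rw [min_eq_right h, dI_swap]
    exact dI_le_logA B A (fun b a => p a b) (fun b a => hp0 a b)
      (by rw [Finset.sum_comm]; exact hp1)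


section MeasurePart

lemma integrable_of_integral_eq_one {f : ℝ × ℝ → ℝ} (h : ∫ z, f z = 1) :
    Integrable f := by
  by_contra hn
  rw [MeasureTheory.integral_undef hn] at h
  norm_num at h

lemma nu_apply {f : ℝ × ℝ → ℝ} (hfi : Integrable f) (hf0 : ∀ z, 0 ≤ f z)
    {S : Set (ℝ × ℝ)} (hS : MeasurableSet S) :
    ((volume.withDensity fun z => ENNReal.ofReal (f z)) S).toReal = ∫ z in S, f z := by
  rw [MeasureTheory.withDensity_apply _ hS]
  rw [← MeasureTheory.ofReal_integral_eq_lintegral_ofReal hfi.integrableOn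
    (Filter.Eventually.of_forall fun z => hf0 z)]
  exact ENNReal.toReal_ofReal (MeasureTheory.integral_nonneg fun z => hf0 z)

lemma nu_univ {f : ℝ × ℝ → ℝ} (hfi : Integrable f) (hf0 : ∀ z, 0 ≤ f z)
    (hf1 : ∫ z, f z = 1) :
    (volume.withDensity fun z => ENNReal.ofReal (f z)) Set.univ = 1 := by
  rw [MeasureTheory.withDensity_apply _ MeasurableSet.univ, Measure.restrict_univ]
  rw [← MeasureTheory.ofReal_integral_eq_lintegral_ofReal hfi
    (Filter.Eventually.of_forall fun z => hf0 z), hf1]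
  simp

lemma measure_split (ν : Measure (ℝ × ℝ)) (g : ℝ × ℝ → ℕ) (hg : Measurable g)
    (n : ℕ) (hlt : ∀ z, g z < n) (T : Set (ℝ × ℝ)) (hT : MeasurableSet T) :
    ν T = ∑ m ∈ Finset.range n, ν (T ∩ {z | g z = m}) := by
  rw [← MeasureTheory.measure_biUnion_finset ?disj ?meas]
  · congr 1
    ext z
    simp only [Set.mem_iUnion, Set.mem_inter_iff, Set.mem_setOf_eq, Finset.mem_range]
    constructor
    · intro hz; exact ⟨g z, hlt z, hz, rfl⟩
    · rintro ⟨m, _, hz, _⟩; exact hz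
  case disj =>
    intro i _ j _ hij
    simp only [Function.onFun, Set.disjoint_left]
    rintro z ⟨_, hzi⟩ ⟨_, hzj⟩
    exact hij (hzi ▸ hzj ▸ rfl)
  case meas =>
    intro m _
    exact hT.inter (hg (measurableSet_singleton m))

end MeasurePart

section Bridge

variable {f f' : ℝ × ℝ → ℝ}

lemma cell_eq_row_inter (rowf colf : ℝ → ℕ) (i j : ℕ) :
    {z : ℝ × ℝ | rowf z.2 = i ∧ colf z.1 = j}
      = {z : ℝ × ℝ | rowf z.2 = i} ∩ {z | colf z.1 = j} := by
  ext z; simp [Set.mem_inter_iff]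

lemma cell_eq_col_inter (rowf colf : ℝ → ℕ) (i j : ℕ) :
    {z : ℝ × ℝ | rowf z.2 = i ∧ colf z.1 = j}
      = {z : ℝ × ℝ | colf z.1 = j} ∩ {z | rowf z.2 = i} := by
  ext z; simp [Set.mem_inter_iff, and_comm]

lemma meas_row {rowf : ℝ → ℕ} (hrow : Measurable rowf) (i : ℕ) :
    MeasurableSet {z : ℝ × ℝ | rowf z.2 = i} :=
  (hrow.comp measurable_snd) (measurableSet_singleton i)

lemma meas_col {colf : ℝ → ℕ} (hcol : Measurable colf) (j : ℕ) :
    MeasurableSet {z : ℝ × ℝ | colf z.1 = j} :=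
  (hcol.comp measurable_fst) (measurableSet_singleton j)

lemma meas_cell {rowf colf : ℝ → ℕ} (hrow : Measurable rowf) (hcol : Measurable colf)
    (i j : ℕ) : MeasurableSet {z : ℝ × ℝ | rowf z.2 = i ∧ colf z.1 = j} := by
  rw [cell_eq_row_inter]
  exact (meas_row hrow i).inter (meas_col hcol j)

lemma gridMI_eq_dI (hfi : Integrable f) (hf0 : ∀ z, 0 ≤ f z) (hf1 : ∫ z, f z = 1)
    (k l : ℕ) (rowf colf : ℝ → ℕ) (hrow : Measurable rowf) (hcol : Measurable colf)
    (hrk : ∀ t, rowf t < k) (hcl : ∀ t, colf t < l) :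
    gridMI (volume.withDensity fun z => ENNReal.ofReal (f z)) k l rowf colf
      = dI (Finset.range k) (Finset.range l)
          (fun i j => ((volume.withDensity fun z => ENNReal.ofReal (f z))
            {z | rowf z.2 = i ∧ colf z.1 = j}).toReal) := by
  set ν := volume.withDensity fun z => ENNReal.ofReal (f z) with hν_def
  have hν1 : ν Set.univ = 1 := nu_univ hfi hf0 hf1
  have hfin : ∀ S : Set (ℝ × ℝ), ν S ≠ ⊤ := fun S => by
    refine ne_top_of_le_ne_top ?_ (measure_mono (Set.subset_univ S))
    rw [hν1]; exact ENNReal.one_ne_top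
  have hrsplit : ∀ i, ν {z | rowf z.2 = i}
      = ∑ j ∈ Finset.range l, ν {z | rowf z.2 = i ∧ colf z.1 = j} := by
    intro i
    rw [measure_split ν (fun z => colf z.1) (hcol.comp measurable_fst) l
      (fun z => hcl z.1) _ (meas_row hrow i)]
    exact Finset.sum_congr rfl fun j _ => by rw [cell_eq_row_inter]
  have hcsplit : ∀ j, ν {z | colf z.1 = j}
      = ∑ i ∈ Finset.range k, ν {z | rowf z.2 = i ∧ colf z.1 = j} := by
    intro j
    rw [measure_split ν (fun z => rowf z.2) (hrow.comp measurable_snd) k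
      (fun z => hrk z.2) _ (meas_col hcol j)]
    exact Finset.sum_congr rfl fun i _ => by rw [cell_eq_col_inter]
  unfold gridMI dI
  congr 1
  · congr 1
    · refine Finset.sum_congr rfl fun i _ => ?_
      rw [hrsplit i, ENNReal.toReal_sum fun j _ => hfin _]
    · refine Finset.sum_congr rfl fun j _ => ?_
      rw [hcsplit j, ENNReal.toReal_sum fun i _ => hfin _]

lemma P_total (hfi : Integrable f) (hf0 : ∀ z, 0 ≤ f z) (hf1 : ∫ z, f z = 1)
    (k l : ℕ) (rowf colf : ℝ → ℕ) (hrow : Measurable rowf) (hcol : Measurable colf)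
    (hrk : ∀ t, rowf t < k) (hcl : ∀ t, colf t < l) :
    ∑ j ∈ Finset.range l, ∑ i ∈ Finset.range k,
        ((volume.withDensity fun z => ENNReal.ofReal (f z))
          {z | rowf z.2 = i ∧ colf z.1 = j}).toReal = 1 := by
  set ν := volume.withDensity fun z => ENNReal.ofReal (f z) with hν_def
  have hν1 : ν Set.univ = 1 := nu_univ hfi hf0 hf1
  have hfin : ∀ S : Set (ℝ × ℝ), ν S ≠ ⊤ := fun S => by
    refine ne_top_of_le_ne_top ?_ (measure_mono (Set.subset_univ S))
    rw [hν1]; exact ENNReal.one_ne_top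
  have hcsplit : ∀ j, ν {z | colf z.1 = j}
      = ∑ i ∈ Finset.range k, ν {z | rowf z.2 = i ∧ colf z.1 = j} := by
    intro j
    rw [measure_split ν (fun z => rowf z.2) (hrow.comp measurable_snd) k
      (fun z => hrk z.2) _ (meas_col hcol j)]
    exact Finset.sum_congr rfl fun i _ => by rw [cell_eq_col_inter]
  have husplit : ν Set.univ = ∑ j ∈ Finset.range l, ν {z | colf z.1 = j} := by
    rw [measure_split ν (fun z => colf z.1) (hcol.comp measurable_fst) l
      (fun z => hcl z.1) _ MeasurableSet.univ]
    exact Finset.sum_congr rfl fun j _ => by rw [Set.univ_inter]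
  have : ∑ j ∈ Finset.range l, ∑ i ∈ Finset.range k,
      (ν {z | rowf z.2 = i ∧ colf z.1 = j}).toReal
      = (ν Set.univ).toReal := by
    rw [husplit, ENNReal.toReal_sum fun j _ => hfin _]
    refine Finset.sum_congr rfl fun j _ => ?_
    rw [hcsplit j, ENNReal.toReal_sum fun i _ => hfin _]
  rw [this, hν1, ENNReal.toReal_one]

end Bridge

section TV

variable {f f' : ℝ × ℝ → ℝ}

lemma P_TV (hfi : Integrable f) (hf0 : ∀ z, 0 ≤ f z)
    (hf'i : Integrable f') (hf'0 : ∀ z, 0 ≤ f' z)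
    (k l : ℕ) (rowf colf : ℝ → ℕ) (hrow : Measurable rowf) (hcol : Measurable colf)
    (hrk : ∀ t, rowf t < k) (hcl : ∀ t, colf t < l)
    {δ : ℝ} (hL1 : ∫ z, |f z - f' z| ≤ 2 * δ) :
    ∑ j ∈ Finset.range l, ∑ i ∈ Finset.range k,
        |((volume.withDensity fun z => ENNReal.ofReal (f z))
            {z | rowf z.2 = i ∧ colf z.1 = j}).toReal
          - ((volume.withDensity fun z => ENNReal.ofReal (f' z))
            {z | rowf z.2 = i ∧ colf z.1 = j}).toReal| ≤ 2 * δ := by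
  set g : ℝ × ℝ → ℝ := fun z => |f z - f' z| with hg_def
  have hgi : Integrable g := (hfi.sub hf'i).abs
  have hg0 : ∀ z, 0 ≤ g z := fun z => abs_nonneg _
  have hcell : ∀ i j, MeasurableSet {z : ℝ × ℝ | rowf z.2 = i ∧ colf z.1 = j} :=
    meas_cell hrow hcol
  -- pointwise bound
  have hpt : ∀ i j, |((volume.withDensity fun z => ENNReal.ofReal (f z))
            {z | rowf z.2 = i ∧ colf z.1 = j}).toReal
          - ((volume.withDensity fun z => ENNReal.ofReal (f' z))
            {z | rowf z.2 = i ∧ colf z.1 = j}).toReal|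
      ≤ ∫ z in {z : ℝ × ℝ | rowf z.2 = i ∧ colf z.1 = j}, g z := by
    intro i j
    rw [nu_apply hfi hf0 (hcell i j), nu_apply hf'i hf'0 (hcell i j)]
    rw [← MeasureTheory.integral_sub hfi.integrableOn hf'i.integrableOn]
    calc |∫ z in {z : ℝ × ℝ | rowf z.2 = i ∧ colf z.1 = j}, (f z - f' z)|
        ≤ ∫ z in {z : ℝ × ℝ | rowf z.2 = i ∧ colf z.1 = j}, |f z - f' z| := by
          simpa [Real.norm_eq_abs] using
            MeasureTheory.norm_integral_le_integral_norm
              (μ := volume.restrict {z : ℝ × ℝ | rowf z.2 = i ∧ colf z.1 = j})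
              (fun z => f z - f' z)
      _ = ∫ z in {z : ℝ × ℝ | rowf z.2 = i ∧ colf z.1 = j}, g z := rfl
  -- additivity of set integrals of g over the partition
  have hinner : ∀ j, ∑ i ∈ Finset.range k,
      ∫ z in {z : ℝ × ℝ | rowf z.2 = i ∧ colf z.1 = j}, g z
      = ∫ z in {z : ℝ × ℝ | colf z.1 = j}, g z := by
    intro j
    rw [← MeasureTheory.integral_biUnion_finset (Finset.range k)
      (fun i _ => hcell i j) ?hd (fun i _ => hgi.integrableOn)]
    · have hset : ⋃ i ∈ Finset.range k, {z : ℝ × ℝ | rowf z.2 = i ∧ colf z.1 = j}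
          = {z : ℝ × ℝ | colf z.1 = j} := by
        ext z
        simp only [Set.mem_iUnion, Set.mem_setOf_eq, Finset.mem_range]
        constructor
        · rintro ⟨i, _, _, hz⟩; exact hz
        · intro hz; exact ⟨rowf z.2, hrk z.2, rfl, hz⟩
      rw [hset]
    case hd =>
      intro i _ i' _ hii'
      simp only [Function.onFun, Set.disjoint_left, Set.mem_setOf_eq]
      rintro z ⟨hzi, _⟩ ⟨hzi', _⟩
      exact hii' (hzi ▸ hzi' ▸ rfl)
  have houter : ∑ j ∈ Finset.range l,
      ∫ z in {z : ℝ × ℝ | colf z.1 = j}, g z = ∫ z, g z := by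
    rw [← MeasureTheory.integral_biUnion_finset (Finset.range l)
      (fun j _ => meas_col hcol j) ?hd (fun j _ => hgi.integrableOn)]
    · have : ⋃ j ∈ Finset.range l, {z : ℝ × ℝ | colf z.1 = j} = Set.univ := by
        ext z
        simp only [Set.mem_iUnion, Set.mem_setOf_eq, Finset.mem_range, Set.mem_univ, iff_true]
        exact ⟨colf z.1, hcl z.1, rfl⟩
      rw [this, MeasureTheory.setIntegral_univ]
    case hd =>
      intro j _ j' _ hjj'
      simp only [Function.onFun, Set.disjoint_left, Set.mem_setOf_eq]
      intro z hzj hzj'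
      exact hjj' (hzj ▸ hzj' ▸ rfl)
  calc ∑ j ∈ Finset.range l, ∑ i ∈ Finset.range k,
        |((volume.withDensity fun z => ENNReal.ofReal (f z))
            {z | rowf z.2 = i ∧ colf z.1 = j}).toReal
          - ((volume.withDensity fun z => ENNReal.ofReal (f' z))
            {z | rowf z.2 = i ∧ colf z.1 = j}).toReal|
      ≤ ∑ j ∈ Finset.range l, ∑ i ∈ Finset.range k,
          ∫ z in {z : ℝ × ℝ | rowf z.2 = i ∧ colf z.1 = j}, g z :=
        Finset.sum_le_sum fun j _ => Finset.sum_le_sum fun i _ => hpt i j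
    _ = ∫ z, g z := by
        rw [Finset.sum_congr rfl fun j (_ : j ∈ Finset.range l) => hinner j, houter]
    _ ≤ 2 * δ := hL1

end TV

section GridLevel

variable {f f' : ℝ × ℝ → ℝ}

lemma gridMI_close (hfi : Integrable f) (hf0 : ∀ z, 0 ≤ f z) (hf1 : ∫ z, f z = 1)
    (hf'i : Integrable f') (hf'0 : ∀ z, 0 ≤ f' z) (hf'1 : ∫ z, f' z = 1)
    (k l : ℕ) (hk : 0 < k) (hl : 0 < l) (rowf colf : ℝ → ℕ)
    (hr : IsIntervalPart k rowf) (hc : IsIntervalPart l colf)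
    {δ : ℝ} (hδ0 : 0 < δ) (hL1 : ∫ z, |f z - f' z| ≤ 2 * δ) :
    |gridMI (volume.withDensity fun z => ENNReal.ofReal (f z)) k l rowf colf
      - gridMI (volume.withDensity fun z => ENNReal.ofReal (f' z)) k l rowf colf|
      ≤ 2 * (δ * Real.log (min k l : ℕ) + (η δ + (1 + δ) * Real.log (1 + δ))) := by
  have hrm : Measurable rowf := hr.1.measurable
  have hcm : Measurable colf := hc.1.measurable
  rw [gridMI_eq_dI hfi hf0 hf1 k l rowf colf hrm hcm hr.2 hc.2,
    gridMI_eq_dI hf'i hf'0 hf'1 k l rowf colf hrm hcm hr.2 hc.2]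
  have := dI_cont_min (Finset.range k) (Finset.range l)
    (Finset.nonempty_range_iff.mpr (Nat.pos_iff_ne_zero.mp hk))
    (Finset.nonempty_range_iff.mpr (Nat.pos_iff_ne_zero.mp hl))
    _ _ (fun i j => ENNReal.toReal_nonneg) (fun i j => ENNReal.toReal_nonneg)
    (P_total hfi hf0 hf1 k l rowf colf hrm hcm hr.2 hc.2)
    (P_total hf'i hf'0 hf'1 k l rowf colf hrm hcm hr.2 hc.2)
    hδ0
    (P_TV hfi hf0 hf'i hf'0 k l rowf colf hrm hcm hr.2 hc.2 hL1)
  simpa [Finset.card_range] using this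

lemma gridMI_le (hfi : Integrable f) (hf0 : ∀ z, 0 ≤ f z) (hf1 : ∫ z, f z = 1)
    (k l : ℕ) (rowf colf : ℝ → ℕ)
    (hr : IsIntervalPart k rowf) (hc : IsIntervalPart l colf) :
    gridMI (volume.withDensity fun z => ENNReal.ofReal (f z)) k l rowf colf
      ≤ Real.log (min k l : ℕ) := by
  have hrm : Measurable rowf := hr.1.measurable
  have hcm : Measurable colf := hc.1.measurable
  rw [gridMI_eq_dI hfi hf0 hf1 k l rowf colf hrm hcm hr.2 hc.2]
  have := dI_le_min (Finset.range k) (Finset.range l)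
    _ (fun i j => ENNReal.toReal_nonneg)
    (P_total hfi hf0 hf1 k l rowf colf hrm hcm hr.2 hc.2)
  simpa [Finset.card_range] using this

lemma gridMI_zero (hfi : Integrable f) (hf0 : ∀ z, 0 ≤ f z) (hf1 : ∫ z, f z = 1)
    (k l : ℕ) :
    gridMI (volume.withDensity fun z => ENNReal.ofReal (f z)) k l
      (fun _ => 0) (fun _ => 0) = 0 := by
  set ν := volume.withDensity fun z => ENNReal.ofReal (f z) with hν_def
  have hν1 : ν Set.univ = 1 := nu_univ hfi hf0 hf1
  unfold gridMI
  have hset : ∀ i : ℕ, {z : ℝ × ℝ | (0:ℕ) = i} = if i = 0 then Set.univ else ∅ := by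
    intro i
    cases i with
    | zero => simp
    | succ n => simp [Nat.succ_ne_zero]
  have hterm : ∀ i : ℕ, Real.negMulLog ((ν {z : ℝ × ℝ | (0:ℕ) = i}).toReal) = 0 := by
    intro i
    rw [hset i]
    cases Decidable.em (i = 0) with
    | inl h => simp [h, hν1]
    | inr h => simp [h]
  have hcellterm : ∀ i j : ℕ,
      Real.negMulLog ((ν {z : ℝ × ℝ | (0:ℕ) = i ∧ (0:ℕ) = j}).toReal) = 0 := by
    intro i j
    rcases Decidable.em (i = 0) with hi | hi
    · rcases Decidable.em (j = 0) with hj | hj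
      · subst hi; subst hj
        have : {z : ℝ × ℝ | (0:ℕ) = 0 ∧ (0:ℕ) = 0} = Set.univ := by simp
        rw [this]; simp [hν1]
      · have : {z : ℝ × ℝ | (0:ℕ) = i ∧ (0:ℕ) = j} = ∅ := by
          ext z; simp; intro _; omega
        rw [this]; simp
    · have : {z : ℝ × ℝ | (0:ℕ) = i ∧ (0:ℕ) = j} = ∅ := by
        ext z; simp; intro h; omega
      rw [this]; simp
  rw [Finset.sum_eq_zero fun i _ => hterm i, Finset.sum_eq_zero fun j _ => hterm j,
    Finset.sum_eq_zero fun i _ => Finset.sum_eq_zero fun j _ => hcellterm i j]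
  ring

end GridLevel

section SupHelpers

lemma bdd_of_le {ι : Sort*} (a : ι → ℝ) (c : ℝ) (h : ∀ i, a i ≤ c) :
    BddAbove (Set.range a) := ⟨c, by rintro x ⟨i, rfl⟩; exact h i⟩

lemma abs_ciSup_sub_le {ι : Sort*} [Nonempty ι] (a b : ι → ℝ)
    (ha : BddAbove (Set.range a)) (hb : BddAbove (Set.range b)) {ε : ℝ}
    (h : ∀ i, |a i - b i| ≤ ε) : |(⨆ i, a i) - ⨆ i, b i| ≤ ε := by
  rw [abs_sub_le_iff]
  constructor
  · rw [sub_le_iff_le_add]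
    refine ciSup_le fun i => ?_
    have h1 := (abs_sub_le_iff.mp (h i)).1
    have h2 := le_ciSup hb i
    linarith
  · rw [sub_le_iff_le_add]
    refine ciSup_le fun i => ?_
    have h1 := (abs_sub_le_iff.mp (h i)).2
    have h2 := le_ciSup ha i
    linarith

end SupHelpers

section IStarLevel

variable {f f' : ℝ × ℝ → ℝ}

lemma gridNonempty {k l : ℕ} (hk : 0 < k) (hl : 0 < l) :
    Nonempty {g : (ℝ → ℕ) × (ℝ → ℕ) // IsIntervalPart k g.1 ∧ IsIntervalPart l g.2} :=
  ⟨⟨(fun _ => 0, fun _ => 0), ⟨⟨monotone_const, fun _ => hk⟩, ⟨monotone_const, fun _ => hl⟩⟩⟩⟩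

lemma IStar_le (hfi : Integrable f) (hf0 : ∀ z, 0 ≤ f z) (hf1 : ∫ z, f z = 1)
    (k l : ℕ) (hk : 0 < k) (hl : 0 < l) :
    IStar (volume.withDensity fun z => ENNReal.ofReal (f z)) k l
      ≤ Real.log (min k l : ℕ) := by
  haveI := gridNonempty hk hl
  exact ciSup_le fun g => gridMI_le hfi hf0 hf1 k l g.1.1 g.1.2 g.2.1 g.2.2

lemma IStar_nonneg (hfi : Integrable f) (hf0 : ∀ z, 0 ≤ f z) (hf1 : ∫ z, f z = 1)
    (k l : ℕ) (hk : 0 < k) (hl : 0 < l) :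
    0 ≤ IStar (volume.withDensity fun z => ENNReal.ofReal (f z)) k l := by
  have hbdd : BddAbove (Set.range fun g :
      {g : (ℝ → ℕ) × (ℝ → ℕ) // IsIntervalPart k g.1 ∧ IsIntervalPart l g.2} =>
      gridMI (volume.withDensity fun z => ENNReal.ofReal (f z)) k l g.1.1 g.1.2) :=
    bdd_of_le _ (Real.log (min k l : ℕ))
      fun g => gridMI_le hfi hf0 hf1 k l g.1.1 g.1.2 g.2.1 g.2.2
  have hle := le_ciSup hbdd (⟨(fun _ => 0, fun _ => 0),
    ⟨⟨monotone_const, fun _ => hk⟩, ⟨monotone_const, fun _ => hl⟩⟩⟩ :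
    {g : (ℝ → ℕ) × (ℝ → ℕ) // IsIntervalPart k g.1 ∧ IsIntervalPart l g.2})
  unfold IStar
  simp only at hle
  rw [gridMI_zero hfi hf0 hf1 k l] at hle
  exact hle

lemma IStar_close (hfi : Integrable f) (hf0 : ∀ z, 0 ≤ f z) (hf1 : ∫ z, f z = 1)
    (hf'i : Integrable f') (hf'0 : ∀ z, 0 ≤ f' z) (hf'1 : ∫ z, f' z = 1)
    (k l : ℕ) (hk : 0 < k) (hl : 0 < l)
    {δ : ℝ} (hδ0 : 0 < δ) (hL1 : ∫ z, |f z - f' z| ≤ 2 * δ) :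
    |IStar (volume.withDensity fun z => ENNReal.ofReal (f z)) k l
      - IStar (volume.withDensity fun z => ENNReal.ofReal (f' z)) k l|
      ≤ 2 * (δ * Real.log (min k l : ℕ) + (η δ + (1 + δ) * Real.log (1 + δ))) := by
  haveI := gridNonempty hk hl
  set ν := volume.withDensity fun z => ENNReal.ofReal (f z) with hν_def
  set ν' := volume.withDensity fun z => ENNReal.ofReal (f' z) with hν'_def
  unfold IStar
  refine abs_ciSup_sub_le
    (fun g : {g : (ℝ → ℕ) × (ℝ → ℕ) // IsIntervalPart k g.1 ∧ IsIntervalPart l g.2} =>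
      gridMI ν k l g.1.1 g.1.2)
    (fun g : {g : (ℝ → ℕ) × (ℝ → ℕ) // IsIntervalPart k g.1 ∧ IsIntervalPart l g.2} =>
      gridMI ν' k l g.1.1 g.1.2) ?_ ?_ ?_
  · exact bdd_of_le _ (Real.log (min k l : ℕ))
      fun g => gridMI_le hfi hf0 hf1 k l g.1.1 g.1.2 g.2.1 g.2.2
  · exact bdd_of_le _ (Real.log (min k l : ℕ))
      fun g => gridMI_le hf'i hf'0 hf'1 k l g.1.1 g.1.2 g.2.1 g.2.2
  · exact fun g => gridMI_close hfi hf0 hf1 hf'i hf'0 hf'1 k l hk hl g.1.1 g.1.2 g.2.1 g.2.2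
      hδ0 hL1

lemma charM_bounds (hfi : Integrable f) (hf0 : ∀ z, 0 ≤ f z) (hf1 : ∫ z, f z = 1)
    (k l : ℕ) (hk : 1 < k) (hl : 1 < l) :
    charMatrix (volume.withDensity fun z => ENNReal.ofReal (f z)) k l ∈
      Set.Icc (0:ℝ) 1 := by
  have hk0 : 0 < k := lt_trans one_pos hk
  have hl0 : 0 < l := lt_trans one_pos hl
  have hmin : (2:ℝ) ≤ min (k:ℝ) (l:ℝ) := le_min (by exact_mod_cast hk) (by exact_mod_cast hl)
  have hlogpos : 0 < Real.log (min (k:ℝ) (l:ℝ)) :=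
    Real.log_pos (by linarith)
  have hcast : ((min k l : ℕ) : ℝ) = min (k:ℝ) (l:ℝ) := by push_cast; rfl
  constructor
  · exact div_nonneg (IStar_nonneg hfi hf0 hf1 k l hk0 hl0) (le_of_lt hlogpos)
  · rw [charMatrix, div_le_one hlogpos]
    have := IStar_le hfi hf0 hf1 k l hk0 hl0
    rwa [hcast] at this

lemma charM_close (hfi : Integrable f) (hf0 : ∀ z, 0 ≤ f z) (hf1 : ∫ z, f z = 1)
    (hf'i : Integrable f') (hf'0 : ∀ z, 0 ≤ f' z) (hf'1 : ∫ z, f' z = 1)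
    (k l : ℕ) (hk : 1 < k) (hl : 1 < l)
    {δ : ℝ} (hδ0 : 0 < δ) (hδ4 : δ ≤ 1/4) (hL1 : ∫ z, |f z - f' z| ≤ 2 * δ) :
    |charMatrix (volume.withDensity fun z => ENNReal.ofReal (f z)) k l
      - charMatrix (volume.withDensity fun z => ENNReal.ofReal (f' z)) k l|
      ≤ 2 * δ + 2 * (η δ + (1 + δ) * Real.log (1 + δ)) / Real.log 2 := by
  have hk0 : 0 < k := lt_trans one_pos hk
  have hl0 : 0 < l := lt_trans one_pos hl
  set c := Real.log (min (k:ℝ) (l:ℝ)) with hc_def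
  have hmin : (2:ℝ) ≤ min (k:ℝ) (l:ℝ) := le_min (by exact_mod_cast hk) (by exact_mod_cast hl)
  have hc2 : Real.log 2 ≤ c := Real.log_le_log two_pos hmin
  have hl2pos : (0:ℝ) < Real.log 2 := Real.log_pos (by norm_num)
  have hcpos : 0 < c := lt_of_lt_of_le hl2pos hc2
  have hcast : ((min k l : ℕ) : ℝ) = min (k:ℝ) (l:ℝ) := by push_cast; rfl
  set C := η δ + (1 + δ) * Real.log (1 + δ) with hC_def
  have hC0 : 0 ≤ C := by
    have h1 : 0 ≤ η δ := Real.negMulLog_nonneg (le_of_lt hδ0) (by linarith)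
    have h2 : 0 ≤ Real.log (1 + δ) := Real.log_nonneg (by linarith)
    have h3 : 0 ≤ (1 + δ) * Real.log (1 + δ) := mul_nonneg (by linarith) h2
    rw [hC_def]; linarith
  have hI := IStar_close hfi hf0 hf1 hf'i hf'0 hf'1 k l hk0 hl0 hδ0 hL1
  rw [hcast, ← hc_def, ← hC_def] at hI
  have habs : |charMatrix (volume.withDensity fun z => ENNReal.ofReal (f z)) k l
      - charMatrix (volume.withDensity fun z => ENNReal.ofReal (f' z)) k l|
      = |IStar (volume.withDensity fun z => ENNReal.ofReal (f z)) k l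
        - IStar (volume.withDensity fun z => ENNReal.ofReal (f' z)) k l| / c := by
    rw [charMatrix, charMatrix, ← hc_def, div_sub_div_same, abs_div, abs_of_pos hcpos]
  rw [habs]
  have step1 : |IStar (volume.withDensity fun z => ENNReal.ofReal (f z)) k l
        - IStar (volume.withDensity fun z => ENNReal.ofReal (f' z)) k l| / c
      ≤ (2 * (δ * c + C)) / c := by
    exact div_le_div_of_nonneg_right hI hcpos.le
  have step2 : (2 * (δ * c + C)) / c = 2 * δ + 2 * C / c := by
    field_simp
  have step3 : 2 * C / c ≤ 2 * C / Real.log 2 := by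
    rw [div_le_div_iff₀ hcpos hl2pos]
    nlinarith [hC0, hc2]
  rw [step2] at step1
  linarith

end IStarLevel

/-- The final numeric comparison. -/
lemma numeric_bound {δ : ℝ} (hδ0 : 0 < δ) (hδ4 : δ ≤ 1/4) :
    2 * δ + 2 * (η δ + (1 + δ) * Real.log (1 + δ)) / Real.log 2
      ≤ 4 * Real.binEntropy (2 * δ) + 7 * δ := by
  set L := Real.log 2 with hL_def
  have hL1 : 0.6931471803 < L := Real.log_two_gt_d9
  have hL2 : L < 0.6931471808 := Real.log_two_lt_d9
  have hLpos : 0 < L := by linarith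
  set x := η δ with hx_def
  -- η δ = -δ log δ ≥ 2 δ L
  have hlogδ : Real.log δ ≤ -(2 * L) := by
    have h1 : Real.log δ ≤ Real.log (1/4) := Real.log_le_log hδ0 hδ4
    have h2 : Real.log (1/4 : ℝ) = -(2 * L) := by
      rw [hL_def, one_div, Real.log_inv]
      have : (4:ℝ) = 2^2 := by norm_num
      rw [this, Real.log_pow]
      push_cast; ring
    linarith
  have hx_lb : 2 * δ * L ≤ x := by
    rw [hx_def, Real.negMulLog]
    nlinarith [hlogδ, hδ0]
  -- log(1+δ) ≤ δ
  have hlog1δ : Real.log (1 + δ) ≤ δ := by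
    have := Real.log_le_sub_one_of_pos (show (0:ℝ) < 1 + δ by linarith)
    linarith
  have hlog1δ0 : 0 ≤ Real.log (1 + δ) := Real.log_nonneg (by linarith)
  -- binEntropy lower bound
  have hbin : 2 * x - 2 * δ * L ≤ Real.binEntropy (2 * δ) := by
    rw [Real.binEntropy_eq_negMulLog_add_negMulLog_one_sub]
    have h1 : 0 ≤ η (1 - 2 * δ) :=
      Real.negMulLog_nonneg (by linarith) (by linarith)
    have h2 : η (2 * δ) = 2 * x - 2 * δ * L := by
      rw [hx_def, Real.negMulLog, Real.negMulLog, hL_def,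
        Real.log_mul two_ne_zero (ne_of_gt hδ0)]
      ring
    linarith
  -- C ≤ x + δ + δ²
  have hC : η δ + (1 + δ) * Real.log (1 + δ) ≤ x + δ + δ^2 := by
    rw [← hx_def]
    nlinarith [hlog1δ, hlog1δ0, hδ0]
  -- main chain: 2δ + 2C/L ≤ 2δ + (4·binEntropy(2δ) + 5δ)  given 2C ≤ (4H+5δ)L
  have hdiv : 2 * (η δ + (1 + δ) * Real.log (1 + δ)) / L
      ≤ 4 * Real.binEntropy (2 * δ) + 5 * δ := by
    rw [div_le_iff₀ hLpos]
    have hH := hbin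
    nlinarith [hx_lb, hδ0, hδ4, hC, hH, hL1, hL2, sq_nonneg (δ - 1/4), sq_nonneg L,
      mul_pos hδ0 hLpos]
  linarith

end MICAux

/-- `MIC*` is uniformly continuous on densities: if two probability densities on `[0,1]²` are
within `2δ` in `L¹` with `0 < δ ≤ 1/4`, then their `MIC*` values differ by at most
`4 H_b(2δ) + 7δ`. -/
theorem stmt14 (f f' : ℝ × ℝ → ℝ) (hfm : Measurable f) (hf'm : Measurable f')
    (hf0 : ∀ z, 0 ≤ f z) (hf'0 : ∀ z, 0 ≤ f' z)
    (hf1 : ∫ z, f z = 1) (hf'1 : ∫ z, f' z = 1)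
    (hfs : ∀ z ∉ Set.Icc (0 : ℝ) 1 ×ˢ Set.Icc (0 : ℝ) 1, f z = 0)
    (hf's : ∀ z ∉ Set.Icc (0 : ℝ) 1 ×ˢ Set.Icc (0 : ℝ) 1, f' z = 0)
    (δ : ℝ) (hδ0 : 0 < δ) (hδ4 : δ ≤ 1 / 4)
    (hL1 : ∫ z, |f z - f' z| ≤ 2 * δ) :
    |MICStar (volume.withDensity fun z => ENNReal.ofReal (f z)) -
        MICStar (volume.withDensity fun z => ENNReal.ofReal (f' z))|
      ≤ 4 * Real.binEntropy (2 * δ) + 7 * δ := by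
  have hfi : Integrable f := MICAux.integrable_of_integral_eq_one hf1
  have hf'i : Integrable f' := MICAux.integrable_of_integral_eq_one hf'1
  haveI : Nonempty {n : ℕ // 1 < n} := ⟨⟨2, one_lt_two⟩⟩
  set ν := volume.withDensity fun z => ENNReal.ofReal (f z) with hν_def
  set ν' := volume.withDensity fun z => ENNReal.ofReal (f' z) with hν'_def
  have hpt : ∀ (k l : {n : ℕ // 1 < n}),
      |charMatrix ν k l - charMatrix ν' k l|
        ≤ 4 * Real.binEntropy (2 * δ) + 7 * δ := by
    intro k l
    refine le_trans (MICAux.charM_close hfi hf0 hf1 hf'i hf'0 hf'1 k l k.2 l.2 hδ0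
      (by linarith) hL1) ?_
    exact MICAux.numeric_bound hδ0 (by linarith)
  unfold MICStar
  refine MICAux.abs_ciSup_sub_le
    (fun k : {n : ℕ // 1 < n} => ⨆ l : {n : ℕ // 1 < n}, charMatrix ν k l)
    (fun k : {n : ℕ // 1 < n} => ⨆ l : {n : ℕ // 1 < n}, charMatrix ν' k l) ?_ ?_ ?_
  · refine MICAux.bdd_of_le _ 1 fun k => ciSup_le fun l => ?_
    exact (MICAux.charM_bounds hfi hf0 hf1 k l k.2 l.2).2
  · refine MICAux.bdd_of_le _ 1 fun k => ciSup_le fun l => ?_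
    exact (MICAux.charM_bounds hf'i hf'0 hf'1 k l k.2 l.2).2
  · intro k
    refine MICAux.abs_ciSup_sub_le
      (fun l : {n : ℕ // 1 < n} => charMatrix ν k l)
      (fun l : {n : ℕ // 1 < n} => charMatrix ν' k l) ?_ ?_ ?_
    · exact MICAux.bdd_of_le _ 1 fun l => (MICAux.charM_bounds hfi hf0 hf1 k l k.2 l.2).2
    · exact MICAux.bdd_of_le _ 1 fun l => (MICAux.charM_bounds hf'i hf'0 hf'1 k l k.2 l.2).2
    · exact fun l => hpt k l
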